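/- Let T be a densely defined closed positive operator on a complex Hilbert space H. Then the following are equivalent: (1) T is minimum attaining; (2) m(T) is an eigenvalue of T, i.e. there exists a nonzero x ∈ D(T) with Tx = m(T)x; (3) m(T) is an extreme point of the numerical range W(T) = {⟨Tx, x⟩ : x ∈ D(T), ‖x‖ = 1}. -/

import Mathlib

open scoped InnerProductSpace ComplexConjugate


theorem form_cauchy_schwarz {V : Type*} [AddCommGroup V] [Module ℂ V] (p : V → V → ℂ)
    (haddr : ∀ u v w, p u (v + w) = p u v + p u w)
    (hsmulr : ∀ (c : ℂ) (u v : V), p u (c • v) = c * p u v)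
    (hherm : ∀ u v, p v u = conj (p u v))
    (hnn : ∀ u, 0 ≤ (p u u).re) (u v : V) :
    ‖ p u v‖ ^ 2 ≤ (p u u).re * (p v v).re := by
  have haddl : ∀ a b w, p (a + b) w = p a w + p b w := by
    intro a b w
    rw [hherm w (a + b), haddr, map_add, ← hherm w a, ← hherm w b]
  have hsmull : ∀ (c : ℂ) (a b : V), p (c • a) b = conj c * p a b := by
    intro c a b
    rw [hherm b (c • a), hsmulr, map_mul, ← hherm b a]
  have hreal : ∀ w, ((p w w).im) = 0 := by
    intro w
    have h2 := congrArg Complex.im (hherm w w)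
    simp only [Complex.conj_im] at h2
    linarith
  by_cases hpv : p u v = 0
  · rw [hpv]
    simpa using mul_nonneg (hnn u) (hnn v)
  obtain ⟨c, hc⟩ : ∃ c : ℂ, c = p u v / ‖ p u v‖ := ⟨_, rfl⟩
  have habsne : (‖ p u v‖ : ℂ) ≠ 0 := by
    simpa using norm_ne_zero_iff.mpr hpv
  have hcmul : conj c * p u v = (‖ p u v‖ : ℂ) := by
    rw [hc, map_div₀, Complex.conj_ofReal, div_mul_eq_mul_div, mul_comm, Complex.mul_conj,
      Complex.normSq_eq_norm_sq]
    push_cast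
    rw [sq]
    field_simp
  have hcmul' : c * conj (p u v) = (‖ p u v‖ : ℂ) := by
    have := congrArg (starRingEnd ℂ) hcmul
    rw [map_mul, Complex.conj_conj, Complex.conj_ofReal] at this
    exact this
  have hcc : conj c * c = 1 := by
    rw [mul_comm, hc, Complex.mul_conj, Complex.normSq_div, Complex.normSq_eq_norm_sq,
      Complex.normSq_eq_norm_sq]
    simp only [Complex.norm_real, Real.norm_eq_abs, abs_of_nonneg (norm_nonneg (p u v))]
    rw [div_self]
    · push_cast; ring
    · simpa using pow_ne_zero 2 (norm_ne_zero_iff.mpr hpv)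
  have hq : ∀ t : ℝ, 0 ≤ (p u u).re * (t * t) + (2 * ‖ p u v‖) * t + (p v v).re := by
    intro t
    have hexp : p (((t : ℂ) * c) • u + v) (((t : ℂ) * c) • u + v)
        = ((t : ℂ) * (t : ℂ)) * p u u + (2 * t * ‖ p u v‖) + p v v := by
      rw [haddl, haddr, haddr, hsmull, hsmulr, hsmulr, hsmull, hherm u v, map_mul,
        Complex.conj_ofReal]
      linear_combination ((t:ℂ) * (t:ℂ) * (p u u)) * hcc + (t:ℂ) * hcmul + (t:ℂ) * hcmul'
    have h0 := hnn (((t : ℂ) * c) • u + v)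
    rw [hexp] at h0
    have hre : (((t : ℂ) * (t : ℂ)) * p u u + (2 * t * ‖ p u v‖) + p v v).re
        = (p u u).re * (t * t) + (2 * ‖ p u v‖) * t + (p v v).re := by
      simp only [Complex.add_re, Complex.mul_re, Complex.ofReal_re, Complex.ofReal_im,
        Complex.mul_im, Complex.ofReal_mul, hreal u, Complex.re_ofNat, Complex.im_ofNat]
      push_cast
      ring
    rw [hre] at h0
    exact h0
  have hd := discrim_le_zero hq
  rw [discrim] at hd
  nlinarith [hnn u, hnn v, norm_nonneg (p u v)]

variable {H : Type*} [NormedAddCommGroup H] [InnerProductSpace ℂ H] [CompleteSpace H]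

/-- The minimum modulus `m(T) = inf {‖Tx‖ : x ∈ D(T), ‖x‖ = 1}`. -/
noncomputable def minMod (T : H →ₗ.[ℂ] H) : ℝ :=
  sInf {r : ℝ | ∃ x : T.domain, ‖(x : H)‖ = 1 ∧ r = ‖T x‖}

/-- `T` is minimum attaining: some unit vector of the domain attains `m(T)`. -/
def MinAttains (T : H →ₗ.[ℂ] H) : Prop :=
  ∃ x : T.domain, ‖(x : H)‖ = 1 ∧ ‖T x‖ = minMod T

/-- A densely defined operator is positive if it is self-adjoint and `⟨Tx, x⟩ ≥ 0`. -/
def IsPositivePMap (T : H →ₗ.[ℂ] H) : Prop :=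
  IsSelfAdjoint T ∧ ∀ x : T.domain, 0 ≤ (⟪T x, (x : H)⟫_ℂ).re

/-- The numerical range `W(T) = {⟨Tx, x⟩ : x ∈ D(T), ‖x‖ = 1}`. -/
def numericalRange (T : H →ₗ.[ℂ] H) : Set ℂ :=
  {z : ℂ | ∃ x : T.domain, ‖(x : H)‖ = 1 ∧ z = ⟪T x, (x : H)⟫_ℂ}

lemma exists_unit_vector (T : H →ₗ.[ℂ] H) (hdense : Dense (T.domain : Set H)) [Nontrivial H] :
    ∃ x : T.domain, ‖(x : H)‖ = 1 := by
  obtain ⟨v, hv⟩ := exists_ne (0 : H)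
  have hball : (Metric.ball v ‖v‖).Nonempty := ⟨v, by simpa using norm_pos_iff.mpr hv⟩
  obtain ⟨y, hy, hyb⟩ := hdense.exists_mem_open Metric.isOpen_ball hball
  have hy0 : y ≠ 0 := by
    intro h
    rw [h] at hyb
    simp [Metric.mem_ball, dist_eq_norm] at hyb
  refine ⟨(‖y‖⁻¹ : ℂ) • ⟨y, hy⟩, ?_⟩
  have : ((((‖y‖⁻¹ : ℂ) • (⟨y, hy⟩ : T.domain)) : T.domain) : H) = (‖y‖⁻¹ : ℂ) • y := rfl
  rw [this, norm_smul]
  simp [norm_inv, inv_mul_cancel₀ (norm_ne_zero_iff.mpr hy0)]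

lemma minMod_nonneg (T : H →ₗ.[ℂ] H) (h : ∃ x : T.domain, ‖(x : H)‖ = 1) : 0 ≤ minMod T := by
  obtain ⟨x, hx⟩ := h
  exact le_csInf ⟨_, x, hx, rfl⟩ (fun r ⟨x, hx, hr⟩ => hr ▸ norm_nonneg _)

lemma minMod_le (T : H →ₗ.[ℂ] H) (x : T.domain) (hx : ‖(x : H)‖ = 1) : minMod T ≤ ‖T x‖ :=
  csInf_le ⟨0, fun r ⟨x, hx, hr⟩ => hr ▸ norm_nonneg _⟩ ⟨x, hx, rfl⟩

lemma minMod_mul_le (T : H →ₗ.[ℂ] H) (x : T.domain) :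
    minMod T * ‖(x : H)‖ ≤ ‖T x‖ := by
  rcases eq_or_ne ((x : H)) 0 with h0 | h0
  · have hx0 : x = 0 := Subtype.ext h0
    simp [h0, hx0]
  · have hn : ‖(x : H)‖ ≠ 0 := norm_ne_zero_iff.mpr h0
    have hu : ‖(((‖(x:H)‖⁻¹ : ℂ) • x : T.domain) : H)‖ = 1 := by
      have : ((((‖(x:H)‖⁻¹ : ℂ) • x) : T.domain) : H) = (‖(x:H)‖⁻¹ : ℂ) • (x : H) := rfl
      rw [this, norm_smul]
      simp [inv_mul_cancel₀ hn]
    have h1 := minMod_le T _ hu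
    rw [T.map_smul, norm_smul] at h1
    have h2 : ‖(‖(x:H)‖⁻¹ : ℂ)‖ = ‖(x:H)‖⁻¹ := by
      simp [norm_inv]
    rw [h2] at h1
    calc minMod T * ‖(x : H)‖ ≤ (‖(x:H)‖⁻¹ * ‖T x‖) * ‖(x : H)‖ := by
          apply mul_le_mul_of_nonneg_right h1 (norm_nonneg _)
      _ = ‖T x‖ := by field_simp
lemma pmap_symm {T : H →ₗ.[ℂ] H} (hdense : Dense (T.domain : Set H)) (hsa : IsSelfAdjoint T) :
    ∀ x y : T.domain, ⟪T x, (y : H)⟫_ℂ = ⟪(x : H), T y⟫_ℂ := by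
  have e : T.adjoint = T := hsa
  have h := LinearPMap.adjoint_isFormalAdjoint hdense (T := T)
  rw [e] at h
  exact fun x y => h x y

lemma pmap_eq_transfer {S R : H →ₗ.[ℂ] H} (e : S = R) {y : H} (hy : y ∈ S.domain) :
    ∃ hy' : y ∈ R.domain, R ⟨y, hy'⟩ = S ⟨y, hy⟩ := by subst e; exact ⟨hy, rfl⟩

lemma pmap_mem_and_eq {T : H →ₗ.[ℂ] H} (hdense : Dense (T.domain : Set H))
    (hsa : IsSelfAdjoint T) {y z : H}
    (h : ∀ x : T.domain, ⟪z, (x : H)⟫_ℂ = ⟪y, T x⟫_ℂ) :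
    ∃ hy : y ∈ T.domain, T ⟨y, hy⟩ = z := by
  have hy' : y ∈ T.adjoint.domain := LinearPMap.mem_adjoint_domain_of_exists _ ⟨z, h⟩
  have happ : T.adjoint ⟨y, hy'⟩ = z := LinearPMap.adjoint_apply_eq hdense _ (fun x => h x)
  obtain ⟨hy, he⟩ := pmap_eq_transfer (hsa : T.adjoint = T) hy'
  exact ⟨hy, he.trans happ⟩

set_option maxHeartbeats 1000000 in
lemma key_ineq {T : H →ₗ.[ℂ] H} (hdense : Dense (T.domain : Set H)) (hclosed : T.IsClosed)
    (hsa : IsSelfAdjoint T) (hpos2 : ∀ x : T.domain, 0 ≤ (⟪T x, (x : H)⟫_ℂ).re)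
    (x1 : T.domain) (hx1 : ‖(x1 : H)‖ = 1) : minMod T ≤ (⟪T x1, (x1 : H)⟫_ℂ).re := by
  classical
  have hsymm := pmap_symm hdense hsa
  have hself : ∀ v : H, (⟪v, v⟫_ℂ).re = ‖v‖ ^ 2 := fun v => by
    have := inner_self_eq_norm_sq (𝕜 := ℂ) v
    simpa [RCLike.re_to_complex] using this
  have hsubsq : ∀ a b : H, ‖a - b‖ ^ 2 = ‖a‖ ^ 2 - 2 * (⟪a, b⟫_ℂ).re + ‖b‖ ^ 2 := fun a b => by
    have := norm_sub_sq (𝕜 := ℂ) a b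
    simpa [RCLike.re_to_complex] using this
  -- construct the bounded inverse A of T + 1
  have hAex : ∃ A : H →L[ℂ] H, ‖A‖ ≤ 1 ∧
      (∀ y : H, ∃ x : T.domain, ((x : H) = A y ∧ T x + (x : H) = y)) ∧
      (∀ x : T.domain, A (T x + (x : H)) = (x : H)) := by
    -- the operator L = T + 1
    set L : T.domain →ₗ[ℂ] H := T.toFun + T.domain.subtype with hL
    have hLapp : ∀ x : T.domain, L x = T x + (x : H) := fun x => rfl
    have hLbound : ∀ x : T.domain, ‖(x : H)‖ ≤ ‖L x‖ := by
      intro x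
      have h1 : ‖(x:H)‖ ^ 2 ≤ (⟪L x, (x : H)⟫_ℂ).re := by
        rw [hLapp, inner_add_left]
        simp only [Complex.add_re]
        rw [hself ((x : H))]
        nlinarith [hpos2 x]
      have h2 : (⟪L x, (x : H)⟫_ℂ).re ≤ ‖L x‖ * ‖(x:H)‖ := by
        calc (⟪L x, (x : H)⟫_ℂ).re ≤ ‖ ⟪L x, (x : H)⟫_ℂ‖ := Complex.re_le_norm _
          _ ≤ ‖L x‖ * ‖(x:H)‖ := by
              exact norm_inner_le_norm _ _
      nlinarith [norm_nonneg (L x), norm_nonneg ((x : H))]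
    have hLinj : Function.Injective L := by
      intro a b hab
      have h0 : L (a - b) = 0 := by rw [map_sub, hab, sub_self]
      have := hLbound (a - b)
      rw [h0, norm_zero] at this
      have : ((a - b : T.domain) : H) = 0 := norm_le_zero_iff.mp this
      have : (a - b : T.domain) = 0 := by exact_mod_cast this
      exact sub_eq_zero.mp this
    have hRclosed : IsClosed ((LinearMap.range L : Submodule ℂ H) : Set H) := by
      apply IsSeqClosed.isClosed
      intro f y hf hfy
      choose xs hxs using hf
      set g : ℕ → H := fun n => ((xs n : H)) with hg
      have hcf : CauchySeq f := hfy.cauchySeq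
      have hcg : CauchySeq g := by
        rw [Metric.cauchySeq_iff] at hcf ⊢
        intro ε hε
        obtain ⟨N, hN⟩ := hcf ε hε
        refine ⟨N, fun a ha b hb => ?_⟩
        have := hN a ha b hb
        rw [dist_eq_norm] at this ⊢
        calc ‖g a - g b‖ = ‖((xs a - xs b : T.domain) : H)‖ := by push_cast [hg]; ring_nf
          _ ≤ ‖L (xs a - xs b)‖ := hLbound _
          _ = ‖f a - f b‖ := by rw [map_sub, hxs a, hxs b]
          _ < ε := this
      obtain ⟨x, hx⟩ := cauchySeq_tendsto_of_complete hcg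
      have hTtend : Filter.Tendsto (fun n => T (xs n)) Filter.atTop (nhds (y - x)) := by
        have : (fun n => T (xs n)) = fun n => f n - g n := by
          funext n
          have := hxs n
          rw [hLapp] at this
          rw [← this, hg]
          abel
        rw [this]
        exact hfy.sub hx
      have hpair : Filter.Tendsto (fun n => (g n, T (xs n))) Filter.atTop (nhds (x, y - x)) :=
        hx.prodMk_nhds hTtend
      have hmem : (x, y - x) ∈ T.graph := by
        refine hclosed.mem_of_tendsto hpair (Filter.Eventually.of_forall fun n => ?_)
        exact T.mem_graph (xs n)
      rw [LinearPMap.mem_graph_iff] at hmem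
      obtain ⟨x', hx'1, hx'2⟩ := hmem
      refine ⟨x', ?_⟩
      rw [hLapp, hx'2, hx'1]
      exact sub_add_cancel y x
    have hRtop : (LinearMap.range L : Submodule ℂ H) = ⊤ := by
      haveI : CompleteSpace ((LinearMap.range L : Submodule ℂ H) : Set H) :=
        hRclosed.completeSpace_coe
      rw [← Submodule.orthogonal_eq_bot_iff]
      rw [Submodule.eq_bot_iff]
      intro y hy
      rw [Submodule.mem_orthogonal] at hy
      have hy' : ∀ x : T.domain, ⟪(-y : H), (x : H)⟫_ℂ = ⟪y, T x⟫_ℂ := by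
        intro x
        have h0 : ⟪y, L x⟫_ℂ = 0 := by
          have := hy (L x) (LinearMap.mem_range_self L x)
          rw [← inner_conj_symm, this, map_zero]
        rw [hLapp, inner_add_right] at h0
        rw [inner_neg_left]
        linear_combination -h0
      obtain ⟨hym, hyeq⟩ := pmap_mem_and_eq hdense hsa hy'
      have hp := hpos2 ⟨y, hym⟩
      rw [hyeq] at hp
      have hneg : (⟪-y, y⟫_ℂ).re = -(‖y‖^2) := by
        rw [inner_neg_left, Complex.neg_re, hself y]
      rw [hneg] at hp
      have : ‖y‖ = 0 := by nlinarith [norm_nonneg y]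
      exact norm_eq_zero.mp this
    have hLsurj : Function.Surjective L := LinearMap.range_eq_top.mp hRtop
    let e := LinearEquiv.ofBijective L ⟨hLinj, hLsurj⟩
    have hLesymm : ∀ y : H, L (e.symm y) = y := fun y => e.apply_symm_apply y
    have hbound : ∀ y, ‖(T.domain.subtype.comp e.symm.toLinearMap) y‖ ≤ 1 * ‖y‖ := by
      intro y
      rw [one_mul]
      calc ‖(T.domain.subtype.comp e.symm.toLinearMap) y‖ = ‖((e.symm y : T.domain) : H)‖ := rfl
        _ ≤ ‖L (e.symm y)‖ := hLbound _
        _ = ‖y‖ := by rw [hLesymm]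
    refine ⟨LinearMap.mkContinuous _ 1 hbound,
      LinearMap.mkContinuous_norm_le _ zero_le_one _, ?_, ?_⟩
    · intro y
      refine ⟨e.symm y, rfl, ?_⟩
      rw [← hLapp]
      exact hLesymm y
    · intro x
      show ((e.symm (T x + (x : H)) : T.domain) : H) = (x : H)
      rw [← hLapp]
      exact congrArg Subtype.val (e.symm_apply_apply x)
  obtain ⟨A, hAnorm1, hrangeA, hALx⟩ := hAex
  -- A is self-adjoint and positive
  have hAsa : ∀ y z : H, ⟪A y, z⟫_ℂ = ⟪y, A z⟫_ℂ := by
    intro y z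
    obtain ⟨u, hu1, hu2⟩ := hrangeA y
    obtain ⟨w, hw1, hw2⟩ := hrangeA z
    rw [← hu1, ← hw1, ← hu2, ← hw2, inner_add_right, inner_add_left]
    linear_combination - hsymm u w
  have hApos : ∀ y, 0 ≤ (⟪A y, y⟫_ℂ).re := by
    intro y
    obtain ⟨u, hu1, hu2⟩ := hrangeA y
    rw [← hu1, ← hu2, inner_add_right]
    have h1 : (⟪(u:H), T u⟫_ℂ).re = (⟪T u, (u:H)⟫_ℂ).re := by
      rw [← inner_conj_symm, Complex.conj_re]
    simp only [Complex.add_re]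
    rw [h1, hself ((u : H))]
    nlinarith [hpos2 u, norm_nonneg ((u : H))]
  have hherm : ∀ u v : H, ⟪A v, u⟫_ℂ = conj (⟪A u, v⟫_ℂ) := by
    intro u v
    rw [hAsa v u, ← inner_conj_symm]
  have hCS : ∀ y z : H, ‖ ⟪A y, z⟫_ℂ‖ ^ 2 ≤ (⟪A y, y⟫_ℂ).re * (⟪A z, z⟫_ℂ).re :=
    fun y z => form_cauchy_schwarz (fun a b => ⟪A a, b⟫_ℂ)
      (fun u v w => inner_add_right _ _ _) (fun c u v => inner_smul_right _ _ _)
      (fun u v => hherm u v) hApos y z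
  -- key quadratic inequality for A
  have hAq' : ∀ w : H, A w ≠ 0 → ‖A w‖ ^ 2 ≤ ‖A‖ * (⟪A w, w⟫_ℂ).re := by
    intro w hw
    have h1 := hCS w (A w)
    have h2 : (⟪A w, A w⟫_ℂ).re = ‖A w‖ ^ 2 := hself _
    have h3 : ‖A w‖ ^ 2 ≤ ‖ ⟪A w, A w⟫_ℂ‖ := by
      rw [← h2]
      exact Complex.re_le_norm _
    have h4 : (⟪A (A w), A w⟫_ℂ).re ≤ ‖A‖ * ‖A w‖ * ‖A w‖ := by
      calc (⟪A (A w), A w⟫_ℂ).re ≤ ‖ ⟪A (A w), A w⟫_ℂ‖ := Complex.re_le_norm _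
        _ ≤ ‖A (A w)‖ * ‖A w‖ := by exact norm_inner_le_norm _ _
        _ ≤ (‖A‖ * ‖A w‖) * ‖A w‖ :=
            mul_le_mul_of_nonneg_right (A.le_opNorm (A w)) (norm_nonneg _)
    have h5 : 0 ≤ (⟪A w, w⟫_ℂ).re := hApos w
    have h0 : 0 < ‖A w‖ := norm_pos_iff.mpr hw
    have k1 : (‖A w‖ ^ 2) ^ 2 ≤ ‖ ⟪A w, A w⟫_ℂ‖ ^ 2 :=
      pow_le_pow_left₀ (sq_nonneg _) h3 2
    have k2 : (⟪A w, w⟫_ℂ).re * (⟪A (A w), A w⟫_ℂ).re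
        ≤ (⟪A w, w⟫_ℂ).re * (‖A‖ * ‖A w‖ * ‖A w‖) := mul_le_mul_of_nonneg_left h4 h5
    nlinarith [k1, k2, h1, mul_pos h0 h0]
  -- fact (a)
  have hfacta : ∀ x : T.domain, ‖(x : H)‖ = 1 →
      1 ≤ ‖A‖ * ((⟪T x, (x : H)⟫_ℂ).re + 1) := by
    intro x hx
    have h1 : A (T x + (x : H)) = (x : H) := hALx x
    have hne : A (T x + (x : H)) ≠ 0 := by
      rw [h1]
      intro h
      rw [h, norm_zero] at hx
      norm_num at hx
    have h2 := hAq' (T x + (x : H)) hne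
    rw [h1, hx] at h2
    have h3 : (⟪(x : H), T x + (x : H)⟫_ℂ).re = (⟪T x, (x : H)⟫_ℂ).re + 1 := by
      rw [inner_add_right]
      simp only [Complex.add_re]
      rw [hself ((x : H)), hx]
      have : (⟪(x:H), T x⟫_ℂ).re = (⟪T x, (x:H)⟫_ℂ).re := by
        rw [← inner_conj_symm, Complex.conj_re]
      rw [this]
      norm_num
    rw [h3] at h2
    simpa using h2
  -- basic facts
  have hm0 : 0 ≤ minMod T := minMod_nonneg T ⟨x1, hx1⟩
  have hlampos : 0 < ‖A‖ := by
    have h1 : A (T x1 + (x1 : H)) = (x1 : H) := hALx x1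
    have h2 : ‖A (T x1 + (x1 : H))‖ ≤ ‖A‖ * ‖T x1 + (x1 : H)‖ := A.le_opNorm _
    rw [h1, hx1] at h2
    nlinarith [norm_nonneg (T x1 + (x1 : H)), norm_nonneg A]
  -- fact (b): m * lam ≤ 1 - lam
  have hfactb : minMod T * ‖A‖ ≤ 1 - ‖A‖ := by
    by_contra hcon
    push_neg at hcon
    obtain ⟨lam, hlam⟩ : ∃ lam : ℝ, lam = ‖A‖ := ⟨_, rfl⟩
    obtain ⟨m, hm⟩ : ∃ m : ℝ, m = minMod T := ⟨_, rfl⟩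
    rw [← hlam, ← hm] at hcon
    rw [← hlam] at hlampos hAnorm1
    rw [← hm] at hm0
    obtain ⟨γ, hγdef⟩ : ∃ γ : ℝ, γ = (m * lam - (1 - lam)) * lam := ⟨_, rfl⟩
    have hγ : 0 < γ := by
      rw [hγdef]
      apply mul_pos _ hlampos
      linarith
    obtain ⟨δ, hδdef⟩ : ∃ δ : ℝ, δ = γ / (2 * (1 + m)) := ⟨_, rfl⟩
    have hδ : 0 < δ := by
      rw [hδdef]
      apply div_pos hγ
      nlinarith
    obtain ⟨ε, hεdef⟩ : ∃ ε : ℝ, ε = min (lam / 2) (δ ^ 2 / (2 * lam ^ 3)) := ⟨_, rfl⟩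
    have hε : 0 < ε := by
      rw [hεdef]
      apply lt_min
      · linarith
      · exact div_pos (pow_pos hδ 2) (by nlinarith [pow_pos hlampos 3])
    have hε1 : ε ≤ lam / 2 := hεdef ▸ min_le_left _ _
    have hε2 : ε ≤ δ ^ 2 / (2 * lam ^ 3) := hεdef ▸ min_le_right _ _
    have hεle : ε * (2 * lam ^ 3) ≤ δ ^ 2 := by
      rw [← le_div_iff₀ (by nlinarith [pow_pos hlampos 3])]
      exact hε2
    have hr : lam - ε < ‖A‖ := by rw [← hlam]; linarith
    obtain ⟨w0, hw01, hw02⟩ := A.exists_lt_apply_of_lt_opNorm hr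
    have hw0pos : 0 < ‖A w0‖ := by
      calc (0:ℝ) < lam / 2 := by linarith
        _ ≤ lam - ε := by linarith
        _ < ‖A w0‖ := hw02
    have hw0ne : 0 < ‖w0‖ := by
      rcases eq_or_lt_of_le (norm_nonneg w0) with h | h
      · exfalso
        have h' : w0 = 0 := norm_eq_zero.mp h.symm
        rw [h', map_zero, norm_zero] at hw0pos
        exact lt_irrefl _ hw0pos
      · exact h
    obtain ⟨w, hwdef⟩ : ∃ w : H, w = (‖w0‖⁻¹ : ℂ) • w0 := ⟨_, rfl⟩
    have hw : ‖w‖ = 1 := by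
      rw [hwdef, norm_smul]
      simp [norm_inv, inv_mul_cancel₀ (ne_of_gt hw0ne)]
    have hAwle : ‖A w‖ ≤ lam := by
      calc ‖A w‖ ≤ ‖A‖ * ‖w‖ := A.le_opNorm w
        _ = lam := by rw [hw, ← hlam, mul_one]
    have hAwgt : lam - ε < ‖A w‖ := by
      have h1 : ‖A w‖ = ‖w0‖⁻¹ * ‖A w0‖ := by
        rw [hwdef, map_smul, norm_smul]
        simp [norm_inv]
      have hinv : 1 ≤ ‖w0‖⁻¹ := one_le_inv_iff₀.mpr ⟨hw0ne, le_of_lt hw01⟩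
      have h2 : ‖A w0‖ ≤ ‖A w‖ := by
        rw [h1]
        nlinarith [hw0pos]
      linarith
    -- approximate eigenvector bound
    have hW2 : ‖A (A w) - ((lam ^ 2 : ℝ) : ℂ) • w‖ ^ 2 ≤ δ ^ 2 := by
      have hexp : ‖A (A w) - ((lam ^ 2 : ℝ) : ℂ) • w‖ ^ 2
          = ‖A (A w)‖ ^ 2 - 2 * (lam ^ 2) * ‖A w‖ ^ 2 + lam ^ 2 * lam ^ 2 := by
        rw [hsubsq]
        have e2 : ⟪A (A w), w⟫_ℂ = ⟪A w, A w⟫_ℂ := hAsa (A w) w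
        have e1 : (⟪A (A w), ((lam ^ 2 : ℝ) : ℂ) • w⟫_ℂ).re = lam ^ 2 * ‖A w‖ ^ 2 := by
          rw [inner_smul_right, e2]
          have : (((lam ^ 2 : ℝ) : ℂ) * ⟪A w, A w⟫_ℂ).re
              = lam ^ 2 * (⟪A w, A w⟫_ℂ).re := by
            rw [Complex.mul_re, Complex.ofReal_re, Complex.ofReal_im]
            ring
          rw [this, hself]
        have e3 : ‖((lam ^ 2 : ℝ) : ℂ) • w‖ ^ 2 = lam ^ 2 * lam ^ 2 := by
          rw [norm_smul, hw, mul_one, Complex.norm_real, Real.norm_eq_abs, abs_of_nonneg (sq_nonneg lam)]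
          ring
        rw [e1, e3]
        ring
      rw [hexp]
      have h6 : ‖A (A w)‖ ≤ lam * ‖A w‖ := by
        have := A.le_opNorm (A w)
        rwa [← hlam] at this
      have h7 : ‖A (A w)‖ ^ 2 ≤ lam ^ 2 * ‖A w‖ ^ 2 := by
        nlinarith [norm_nonneg (A (A w)), norm_nonneg (A w), hlampos]
      have h8 : (lam - ε) ^ 2 ≤ ‖A w‖ ^ 2 := by
        nlinarith [hAwgt, hε1, hlampos]
      have h9 : lam ^ 2 * (lam - ε) ^ 2 ≤ lam ^ 2 * ‖A w‖ ^ 2 :=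
        mul_le_mul_of_nonneg_left h8 (sq_nonneg lam)
      nlinarith [hεle, sq_nonneg ε, sq_nonneg lam, hε, hlampos, mul_pos hlampos hlampos,
        mul_nonneg (mul_nonneg (le_of_lt hlampos) (le_of_lt hlampos)) (le_of_lt hε)]
    have hdel : ‖A (A w) - ((lam ^ 2 : ℝ) : ℂ) • w‖ ≤ δ := by
      nlinarith [norm_nonneg (A (A w) - ((lam ^ 2 : ℝ) : ℂ) • w), hδ, hW2]
    obtain ⟨v, hvdef⟩ : ∃ v : H, v = A w + ((lam : ℝ) : ℂ) • w := ⟨_, rfl⟩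
    have hvnorm : lam ≤ ‖v‖ := by
      have hvw : lam ≤ (⟪v, w⟫_ℂ).re := by
        rw [hvdef, inner_add_left, inner_smul_left, Complex.conj_ofReal]
        simp only [Complex.add_re]
        have : (((lam : ℝ) : ℂ) * ⟪w, w⟫_ℂ).re = lam * (⟪w, w⟫_ℂ).re := by
          rw [Complex.mul_re]; simp
        rw [this, hself, hw]
        nlinarith [hApos w]
      calc lam ≤ (⟪v, w⟫_ℂ).re := hvw
        _ ≤ ‖ ⟪v, w⟫_ℂ‖ := Complex.re_le_norm _
        _ ≤ ‖v‖ * ‖w‖ := by exact norm_inner_le_norm _ _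
        _ = ‖v‖ := by rw [hw, mul_one]
    have hAv : ‖A v - ((lam : ℝ) : ℂ) • v‖ ≤ δ := by
      have hident : A v - ((lam : ℝ) : ℂ) • v = A (A w) - ((lam ^ 2 : ℝ) : ℂ) • w := by
        rw [hvdef, map_add, map_smul]
        have hcast : ((lam ^ 2 : ℝ) : ℂ) = ((lam : ℝ) : ℂ) * ((lam : ℝ) : ℂ) := by
          push_cast; ring
        rw [hcast]
        module
      rw [hident]
      exact hdel
    obtain ⟨xv, hxv1, hxv2⟩ := hrangeA v
    have hTxv : (T xv : H) = v - A v := by rw [← hxv1, ← hxv2]; abel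
    have hTnorm : ‖T xv‖ ≤ (1 - lam) * ‖v‖ + δ := by
      rw [hTxv]
      have hsplit : v - A v = (v - ((lam : ℝ) : ℂ) • v) + (((lam : ℝ) : ℂ) • v - A v) := by abel
      rw [hsplit]
      have h10 : ‖v - ((lam : ℝ) : ℂ) • v‖ = (1 - lam) * ‖v‖ := by
        have hvv : v - ((lam : ℝ) : ℂ) • v = (((1 - lam : ℝ)) : ℂ) • v := by
          push_cast
          module
        rw [hvv, norm_smul, Complex.norm_real, Real.norm_eq_abs, abs_of_nonneg (by linarith : (0:ℝ) ≤ 1 - lam)]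
      have h11 : ‖((lam : ℝ) : ℂ) • v - A v‖ ≤ δ := by
        rw [norm_sub_rev]
        exact hAv
      calc ‖(v - ((lam : ℝ) : ℂ) • v) + (((lam : ℝ) : ℂ) • v - A v)‖
          ≤ ‖v - ((lam : ℝ) : ℂ) • v‖ + ‖((lam : ℝ) : ℂ) • v - A v‖ := norm_add_le _ _
        _ ≤ (1 - lam) * ‖v‖ + δ := by rw [h10]; linarith
    have hxnorm : lam * ‖v‖ - δ ≤ ‖(xv : H)‖ := by
      rw [hxv1]
      have h13 : ‖((lam : ℝ) : ℂ) • v‖ - ‖A v‖ ≤ ‖((lam : ℝ) : ℂ) • v - A v‖ :=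
        norm_sub_norm_le _ _
      have h14 : ‖((lam : ℝ) : ℂ) • v‖ = lam * ‖v‖ := by
        rw [norm_smul, Complex.norm_real, Real.norm_eq_abs, abs_of_nonneg (le_of_lt hlampos)]
      have h15 : ‖((lam : ℝ) : ℂ) • v - A v‖ ≤ δ := by rw [norm_sub_rev]; exact hAv
      linarith
    have hmx : m * ‖(xv : H)‖ ≤ ‖T xv‖ := by
      rw [hm]
      exact minMod_mul_le T xv
    have hfin : (m * lam - (1 - lam)) * ‖v‖ ≤ (1 + m) * δ := by
      nlinarith [hmx, hTnorm, hxnorm, hm0, norm_nonneg ((xv : H)), hδ, norm_nonneg (T xv)]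
    have hcontr : γ ≤ (1 + m) * δ := by
      calc γ = (m * lam - (1 - lam)) * lam := hγdef
        _ ≤ (m * lam - (1 - lam)) * ‖v‖ := by
            apply mul_le_mul_of_nonneg_left hvnorm (by linarith)
        _ ≤ (1 + m) * δ := hfin
    have heq : (1 + m) * δ = γ / 2 := by
      rw [hδdef]
      field_simp
    rw [heq] at hcontr
    linarith
  -- conclusion
  have ha := hfacta x1 hx1
  nlinarith [hlampos, hfactb, hm0]

lemma key_ineq' {T : H →ₗ.[ℂ] H} (hdense : Dense (T.domain : Set H)) (hclosed : T.IsClosed)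
    (hsa : IsSelfAdjoint T) (hpos2 : ∀ x : T.domain, 0 ≤ (⟪T x, (x : H)⟫_ℂ).re)
    (x : T.domain) : minMod T * ‖(x : H)‖ ^ 2 ≤ (⟪T x, (x : H)⟫_ℂ).re := by
  rcases eq_or_ne ((x : H)) 0 with h0 | h0
  · have hx0 : x = 0 := Subtype.ext h0
    simp [h0, hx0]
  · have hn : (0:ℝ) < ‖(x : H)‖ := norm_pos_iff.mpr h0
    obtain ⟨u, hudef⟩ : ∃ u : T.domain, u = (‖(x:H)‖⁻¹ : ℂ) • x := ⟨_, rfl⟩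
    have hu : ‖(u : H)‖ = 1 := by
      rw [hudef]
      have hc : ((((‖(x:H)‖⁻¹ : ℂ) • x) : T.domain) : H) = (‖(x:H)‖⁻¹ : ℂ) • (x : H) := rfl
      rw [hc, norm_smul]
      simp [norm_inv, inv_mul_cancel₀ (ne_of_gt hn)]
    have hk := key_ineq hdense hclosed hsa hpos2 u hu
    have hival : (⟪T u, (u : H)⟫_ℂ).re = ‖(x:H)‖⁻¹ ^ 2 * (⟪T x, (x : H)⟫_ℂ).re := by
      rw [hudef, LinearPMap.map_smul]
      have hc : ((((‖(x:H)‖⁻¹ : ℂ) • x) : T.domain) : H) = (‖(x:H)‖⁻¹ : ℂ) • (x : H) := rfl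
      rw [hc, inner_smul_left, inner_smul_right, map_inv₀, Complex.conj_ofReal,
        ← Complex.ofReal_inv, ← mul_assoc, ← Complex.ofReal_mul, Complex.re_ofReal_mul]
      ring
    rw [hival] at hk
    have h2 : minMod T * ‖(x:H)‖ ^ 2 ≤ (‖(x:H)‖⁻¹ ^ 2 * (⟪T x, (x : H)⟫_ℂ).re) * ‖(x:H)‖ ^ 2 := by
      nlinarith [sq_nonneg ‖(x:H)‖]
    calc minMod T * ‖(x:H)‖ ^ 2 ≤ (‖(x:H)‖⁻¹ ^ 2 * (⟪T x, (x : H)⟫_ℂ).re) * ‖(x:H)‖ ^ 2 := h2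
      _ = (⟪T x, (x : H)⟫_ℂ).re := by
          field_simp

set_option maxHeartbeats 1000000 in
/-- For a densely defined closed positive operator `T`, the following are equivalent:
(1) `T` is minimum attaining; (2) `m(T)` is an eigenvalue of `T`;
(3) `m(T)` is an extreme point of the numerical range `W(T)`. -/
theorem minAttains_iff_eigenvalue_iff_extremePoint (T : H →ₗ.[ℂ] H)
    (hdense : Dense (T.domain : Set H)) (hclosed : T.IsClosed) (hpos : IsPositivePMap T) :
    (MinAttains T ↔ ∃ x : T.domain, (x : H) ≠ 0 ∧ T x = (minMod T : ℂ) • (x : H)) ∧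
    (MinAttains T ↔ (minMod T : ℂ) ∈ Set.extremePoints ℝ (numericalRange T)) := by
  obtain ⟨hsa, hpos2⟩ := hpos
  rcases subsingleton_or_nontrivial H with hsub | hnt
  · -- trivial Hilbert space: all three statements are false
    have hnounit : ∀ x : T.domain, ‖(x : H)‖ ≠ 1 := by
      intro x
      have hx : (x : H) = 0 := Subsingleton.elim _ _
      rw [hx, norm_zero]
      norm_num
    constructor
    · constructor
      · rintro ⟨x, hx, -⟩
        exact absurd hx (hnounit x)
      · rintro ⟨x, hx0, -⟩
        exact absurd (Subsingleton.elim ((x : H)) 0) hx0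
    · constructor
      · rintro ⟨x, hx, -⟩
        exact absurd hx (hnounit x)
      · intro h
        obtain ⟨x, hx, -⟩ := h.1
        exact absurd hx (hnounit x)
  · -- nontrivial case
    have hexu := exists_unit_vector T hdense
    have hm0 : 0 ≤ minMod T := minMod_nonneg T hexu
    have hsymm := pmap_symm hdense hsa
    have hself : ∀ v : H, (⟪v, v⟫_ℂ).re = ‖v‖ ^ 2 := fun v => by
      have := inner_self_eq_norm_sq (𝕜 := ℂ) v
      simpa [RCLike.re_to_complex] using this
    have hselfC : ∀ v : H, ⟪v, v⟫_ℂ = ((‖v‖ ^ 2 : ℝ) : ℂ) := fun v => by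
      apply Complex.ext
      · rw [hself]
        exact (Complex.ofReal_re _).symm
      · have him := inner_self_im (𝕜 := ℂ) v
        simp only [RCLike.im_to_complex] at him
        rw [Complex.ofReal_im]
        exact him
    have hrealv : ∀ x : T.domain, ⟪T x, (x : H)⟫_ℂ = (((⟪T x, (x : H)⟫_ℂ).re : ℝ) : ℂ) := by
      intro x
      have h1 : conj (⟪T x, (x : H)⟫_ℂ) = ⟪T x, (x : H)⟫_ℂ := by
        rw [inner_conj_symm]
        exact (hsymm x x).symm
      exact (Complex.conj_eq_iff_re.mp h1).symm
    have hkey : ∀ x : T.domain, ‖(x : H)‖ = 1 → minMod T ≤ (⟪T x, (x : H)⟫_ℂ).re :=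
      fun x hx => key_ineq hdense hclosed hsa hpos2 x hx
    have hkey' : ∀ x : T.domain, minMod T * ‖(x : H)‖ ^ 2 ≤ (⟪T x, (x : H)⟫_ℂ).re :=
      fun x => key_ineq' hdense hclosed hsa hpos2 x
    -- normalizing an eigenvector
    have hnormalize : (∃ x : T.domain, (x : H) ≠ 0 ∧ T x = (minMod T : ℂ) • (x : H)) →
        ∃ u : T.domain, ‖(u : H)‖ = 1 ∧ T u = (minMod T : ℂ) • (u : H) := by
      rintro ⟨x, hx0, hTx⟩
      have hn : (0:ℝ) < ‖(x : H)‖ := norm_pos_iff.mpr hx0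
      refine ⟨(‖(x:H)‖⁻¹ : ℂ) • x, ?_, ?_⟩
      · have hc : ((((‖(x:H)‖⁻¹ : ℂ) • x) : T.domain) : H) = (‖(x:H)‖⁻¹ : ℂ) • (x : H) := rfl
        rw [hc, norm_smul]
        simp [norm_inv, inv_mul_cancel₀ (ne_of_gt hn)]
      · rw [LinearPMap.map_smul, hTx]
        have hc : ((((‖(x:H)‖⁻¹ : ℂ) • x) : T.domain) : H) = (‖(x:H)‖⁻¹ : ℂ) • (x : H) := rfl
        rw [hc, smul_smul, smul_smul, mul_comm]
    -- (2) → (1)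
    have himp21 : (∃ x : T.domain, (x : H) ≠ 0 ∧ T x = (minMod T : ℂ) • (x : H)) →
        MinAttains T := by
      intro h
      obtain ⟨u, hu, hTu⟩ := hnormalize h
      refine ⟨u, hu, ?_⟩
      rw [hTu, norm_smul, hu, mul_one, Complex.norm_real, Real.norm_eq_abs,
        abs_of_nonneg hm0]
    -- (1) → (2)
    have himp12 : MinAttains T →
        (∃ x : T.domain, (x : H) ≠ 0 ∧ T x = (minMod T : ℂ) • (x : H)) := by
      rintro ⟨x₀, hx₀, hTx₀⟩
      have hx₀ne : (x₀ : H) ≠ 0 := by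
        intro h
        rw [h, norm_zero] at hx₀
        norm_num at hx₀
      rcases eq_or_lt_of_le hm0 with hm | hm
      · -- minMod T = 0
        refine ⟨x₀, hx₀ne, ?_⟩
        have hT0 : T x₀ = 0 := by
          apply norm_eq_zero.mp
          rw [hTx₀, ← hm]
        rw [hT0, ← hm]
        simp
      · -- minMod T > 0
        have hBadd : ∀ u v w : T.domain,
            ⟪T u, T (v + w)⟫_ℂ - ((minMod T ^ 2 : ℝ) : ℂ) * ⟪(u:H), ((v + w : T.domain):H)⟫_ℂ
            = (⟪T u, T v⟫_ℂ - ((minMod T ^ 2 : ℝ) : ℂ) * ⟪(u:H), (v:H)⟫_ℂ)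
              + (⟪T u, T w⟫_ℂ - ((minMod T ^ 2 : ℝ) : ℂ) * ⟪(u:H), (w:H)⟫_ℂ) := by
          intro u v w
          rw [LinearPMap.map_add, inner_add_right, Submodule.coe_add, inner_add_right]
          ring
        have hBsmul : ∀ (c : ℂ) (u v : T.domain),
            ⟪T u, T (c • v)⟫_ℂ - ((minMod T ^ 2 : ℝ) : ℂ) * ⟪(u:H), ((c • v : T.domain):H)⟫_ℂ
            = c * (⟪T u, T v⟫_ℂ - ((minMod T ^ 2 : ℝ) : ℂ) * ⟪(u:H), (v:H)⟫_ℂ) := by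
          intro c u v
          rw [LinearPMap.map_smul, inner_smul_right, Submodule.coe_smul, inner_smul_right]
          ring
        have hBherm : ∀ u v : T.domain,
            ⟪T v, T u⟫_ℂ - ((minMod T ^ 2 : ℝ) : ℂ) * ⟪(v:H), (u:H)⟫_ℂ
            = conj (⟪T u, T v⟫_ℂ - ((minMod T ^ 2 : ℝ) : ℂ) * ⟪(u:H), (v:H)⟫_ℂ) := by
          intro u v
          rw [map_sub, map_mul, Complex.conj_ofReal, inner_conj_symm, inner_conj_symm]
        have hBnn : ∀ u : T.domain,
            0 ≤ (⟪T u, T u⟫_ℂ - ((minMod T ^ 2 : ℝ) : ℂ) * ⟪(u:H), (u:H)⟫_ℂ).re := by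
          intro u
          have h1 : ((⟪T u, T u⟫_ℂ) - ((minMod T ^ 2 : ℝ) : ℂ) * ⟪(u:H), (u:H)⟫_ℂ).re
              = ‖T u‖ ^ 2 - minMod T ^ 2 * ‖(u:H)‖ ^ 2 := by
            rw [Complex.sub_re, Complex.re_ofReal_mul, hself, hself]
          rw [h1]
          have h2 := minMod_mul_le T u
          have hk := mul_le_mul h2 h2 (mul_nonneg hm0 (norm_nonneg _)) (norm_nonneg _)
          nlinarith [hk]
        have hBcs : ∀ u v : T.domain,
            ‖ ⟪T u, T v⟫_ℂ - ((minMod T ^ 2 : ℝ) : ℂ) * ⟪(u:H), (v:H)⟫_ℂ‖ ^ 2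
            ≤ (⟪T u, T u⟫_ℂ - ((minMod T ^ 2 : ℝ) : ℂ) * ⟪(u:H), (u:H)⟫_ℂ).re
              * (⟪T v, T v⟫_ℂ - ((minMod T ^ 2 : ℝ) : ℂ) * ⟪(v:H), (v:H)⟫_ℂ).re :=
          fun u v => form_cauchy_schwarz _ hBadd hBsmul hBherm hBnn u v
        have hBx0 : ((⟪T x₀, T x₀⟫_ℂ) - ((minMod T ^ 2 : ℝ) : ℂ) * ⟪(x₀:H), (x₀:H)⟫_ℂ).re
            = 0 := by
          rw [Complex.sub_re, Complex.re_ofReal_mul, hself, hself, hTx₀, hx₀]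
          ring
        have hB0 : ∀ h : T.domain,
            ⟪T x₀, T h⟫_ℂ = ((minMod T ^ 2 : ℝ) : ℂ) * ⟪(x₀:H), (h:H)⟫_ℂ := by
          intro h
          have hcs := hBcs x₀ h
          rw [hBx0, zero_mul] at hcs
          have habs : ‖
              ⟪T x₀, T h⟫_ℂ - ((minMod T ^ 2 : ℝ) : ℂ) * ⟪(x₀:H), (h:H)⟫_ℂ‖ = 0 := by
            nlinarith [norm_nonneg
              (⟪T x₀, T h⟫_ℂ - ((minMod T ^ 2 : ℝ) : ℂ) * ⟪(x₀:H), (h:H)⟫_ℂ)]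
          have h0 := norm_eq_zero.mp habs
          linear_combination h0
        obtain ⟨hmemT, heqT⟩ := pmap_mem_and_eq hdense hsa
          (y := (T x₀ : H)) (z := ((minMod T ^ 2 : ℝ) : ℂ) • (x₀ : H)) (fun h => by
            rw [inner_smul_left, Complex.conj_ofReal, hB0 h])
        refine ⟨⟨(T x₀ : H), hmemT⟩ + (minMod T : ℂ) • x₀, ?_, ?_⟩
        · intro h0
          have hco : (((⟨(T x₀ : H), hmemT⟩ + (minMod T : ℂ) • x₀ : T.domain)) : H)
              = (T x₀ : H) + (minMod T : ℂ) • (x₀ : H) := rfl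
          rw [hco] at h0
          have hip : (⟪(T x₀ : H) + (minMod T : ℂ) • (x₀ : H), (x₀ : H)⟫_ℂ).re
              = (⟪T x₀, (x₀ : H)⟫_ℂ).re + minMod T := by
            rw [inner_add_left, inner_smul_left, Complex.conj_ofReal, Complex.add_re,
              Complex.re_ofReal_mul, hself, hx₀]
            ring
          rw [h0] at hip
          simp only [inner_zero_left, Complex.zero_re] at hip
          have := hpos2 x₀
          linarith
        · rw [LinearPMap.map_add, LinearPMap.map_smul, heqT]
          have hco : (((⟨(T x₀ : H), hmemT⟩ + (minMod T : ℂ) • x₀ : T.domain)) : H)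
              = (T x₀ : H) + (minMod T : ℂ) • (x₀ : H) := rfl
          rw [hco]
          have hcast : ((minMod T ^ 2 : ℝ) : ℂ) = (minMod T : ℂ) * (minMod T : ℂ) := by
            push_cast
            ring
          rw [hcast]
          module
    -- (1) → (3)
    have himp13 : MinAttains T → (minMod T : ℂ) ∈ Set.extremePoints ℝ (numericalRange T) := by
      intro hMA
      obtain ⟨u, hu, hTu⟩ := hnormalize (himp12 hMA)
      have hmemW : (minMod T : ℂ) ∈ numericalRange T := by
        refine ⟨u, hu, ?_⟩
        rw [hTu, inner_smul_left, Complex.conj_ofReal, hselfC, hu]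
        norm_num
      rw [mem_extremePoints]
      refine ⟨hmemW, ?_⟩
      intro z₁ hz₁ z₂ hz₂ hseg
      obtain ⟨w₁, hw₁, he₁⟩ := hz₁
      obtain ⟨w₂, hw₂, he₂⟩ := hz₂
      have hr₁ : minMod T ≤ z₁.re := by rw [he₁]; exact hkey w₁ hw₁
      have hr₂ : minMod T ≤ z₂.re := by rw [he₂]; exact hkey w₂ hw₂
      have hreal₁ : z₁ = ((z₁.re : ℝ) : ℂ) := by rw [he₁]; exact hrealv w₁
      have hreal₂ : z₂ = ((z₂.re : ℝ) : ℂ) := by rw [he₂]; exact hrealv w₂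
      obtain ⟨a, b, ha, hb, hab, habz⟩ := hseg
      have hre := congrArg Complex.re habz
      simp only [Complex.add_re, Complex.smul_re, smul_eq_mul, Complex.ofReal_re] at hre
      have h₁ : z₁.re = minMod T := by nlinarith
      have h₂ : z₂.re = minMod T := by nlinarith
      constructor
      · rw [hreal₁, h₁]
      · rw [hreal₂, h₂]
    -- (3) → (1)
    have himp31 : (minMod T : ℂ) ∈ Set.extremePoints ℝ (numericalRange T) → MinAttains T := by
      intro hext
      obtain ⟨x, hx, hxe⟩ := hext.1
      have hxne : (x : H) ≠ 0 := by
        intro h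
        rw [h, norm_zero] at hx
        norm_num at hx
      have hqadd : ∀ u v w : T.domain,
          ⟪T u, ((v + w : T.domain):H)⟫_ℂ
            - ((minMod T : ℝ) : ℂ) * ⟪(u:H), ((v + w : T.domain):H)⟫_ℂ
          = (⟪T u, (v:H)⟫_ℂ - ((minMod T : ℝ) : ℂ) * ⟪(u:H), (v:H)⟫_ℂ)
            + (⟪T u, (w:H)⟫_ℂ - ((minMod T : ℝ) : ℂ) * ⟪(u:H), (w:H)⟫_ℂ) := by
        intro u v w
        rw [Submodule.coe_add, inner_add_right, inner_add_right]
        ring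
      have hqsmul : ∀ (c : ℂ) (u v : T.domain),
          ⟪T u, ((c • v : T.domain):H)⟫_ℂ
            - ((minMod T : ℝ) : ℂ) * ⟪(u:H), ((c • v : T.domain):H)⟫_ℂ
          = c * (⟪T u, (v:H)⟫_ℂ - ((minMod T : ℝ) : ℂ) * ⟪(u:H), (v:H)⟫_ℂ) := by
        intro c u v
        rw [Submodule.coe_smul, inner_smul_right, inner_smul_right]
        ring
      have hqherm : ∀ u v : T.domain,
          ⟪T v, (u:H)⟫_ℂ - ((minMod T : ℝ) : ℂ) * ⟪(v:H), (u:H)⟫_ℂ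
          = conj (⟪T u, (v:H)⟫_ℂ - ((minMod T : ℝ) : ℂ) * ⟪(u:H), (v:H)⟫_ℂ) := by
        intro u v
        rw [map_sub, map_mul, Complex.conj_ofReal, inner_conj_symm, inner_conj_symm,
          hsymm v u]
      have hqnn : ∀ u : T.domain,
          0 ≤ (⟪T u, (u:H)⟫_ℂ - ((minMod T : ℝ) : ℂ) * ⟪(u:H), (u:H)⟫_ℂ).re := by
        intro u
        have h1 : ((⟪T u, (u:H)⟫_ℂ) - ((minMod T : ℝ) : ℂ) * ⟪(u:H), (u:H)⟫_ℂ).re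
            = (⟪T u, (u:H)⟫_ℂ).re - minMod T * ‖(u:H)‖ ^ 2 := by
          rw [Complex.sub_re, Complex.re_ofReal_mul, hself]
        rw [h1]
        have := hkey' u
        linarith
      have hqcs : ∀ u v : T.domain,
          ‖ ⟪T u, (v:H)⟫_ℂ - ((minMod T : ℝ) : ℂ) * ⟪(u:H), (v:H)⟫_ℂ‖ ^ 2
          ≤ (⟪T u, (u:H)⟫_ℂ - ((minMod T : ℝ) : ℂ) * ⟪(u:H), (u:H)⟫_ℂ).re
            * (⟪T v, (v:H)⟫_ℂ - ((minMod T : ℝ) : ℂ) * ⟪(v:H), (v:H)⟫_ℂ).re :=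
        fun u v => form_cauchy_schwarz _ hqadd hqsmul hqherm hqnn u v
      have hqx : ((⟪T x, (x:H)⟫_ℂ) - ((minMod T : ℝ) : ℂ) * ⟪(x:H), (x:H)⟫_ℂ) = 0 := by
        rw [← hxe, hselfC, hx]
        norm_num
      have hq0 : ∀ h : T.domain, ⟪T h, (x:H)⟫_ℂ = ((minMod T : ℝ) : ℂ) * ⟪(h:H), (x:H)⟫_ℂ := by
        intro h
        have hcs := hqcs h x
        rw [hqx] at hcs
        simp only [Complex.zero_re, mul_zero] at hcs
        have habs : ‖
            ⟪T h, (x:H)⟫_ℂ - ((minMod T : ℝ) : ℂ) * ⟪(h:H), (x:H)⟫_ℂ‖ = 0 := by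
          nlinarith [norm_nonneg
            (⟪T h, (x:H)⟫_ℂ - ((minMod T : ℝ) : ℂ) * ⟪(h:H), (x:H)⟫_ℂ)]
        have h0 := norm_eq_zero.mp habs
        linear_combination h0
      obtain ⟨hmem2, heq2⟩ := pmap_mem_and_eq hdense hsa
        (y := (x : H)) (z := (minMod T : ℂ) • (x : H)) (fun h => by
          rw [inner_smul_left, Complex.conj_ofReal]
          have hc := congrArg (starRingEnd ℂ) (hq0 h)
          rw [map_mul, Complex.conj_ofReal, inner_conj_symm, inner_conj_symm] at hc
          rw [hc])
      have hxx : (⟨(x : H), hmem2⟩ : T.domain) = x := Subtype.ext rfl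
      rw [hxx] at heq2
      exact himp21 ⟨x, hxne, heq2⟩
    exact ⟨⟨himp12, himp21⟩, ⟨himp13, himp31⟩⟩
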